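/- Vandermonde evaluation at roots of unity: fix n ≥ 2, 1 ≤ ℓ ≤ n-1, and set z_k := e^{(2πi/n)((n-ℓ+1)/2 + k - 1)} for 1 ≤ k ≤ ℓ. For any tuple h = (h₁,...,h_ℓ) of distinct elements of {0,...,n-1}, the determinant of the ℓ×ℓ matrix A with A(j,k) = z_k^{h_j} equals sgn(σ_h) · (-1)^{Σ_j h_j} · i^{ℓ(ℓ-1)/2} · ∏_{1 ≤ j < k ≤ ℓ} |e^{2πi h_k/n} - e^{2πi h_j/n}|, where σ_h is the permutation sorting h into increasing order. -/

import Mathlib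

open Finset in
private lemma prod_pairs_aux {M : Type*} [CommMonoid M] {ℓ : ℕ} (f : Fin ℓ → Fin ℓ → M) :
    ∏ p ∈ Finset.univ.filter (fun p : Fin ℓ × Fin ℓ => p.1 < p.2), f p.1 p.2
      = ∏ i, ∏ j ∈ Finset.Ioi i, f i j := by
  rw [Finset.prod_sigma']
  exact Finset.prod_nbij' (fun p => ⟨p.1, p.2⟩) (fun p => (p.1, p.2))
    (by simp [Finset.mem_Ioi]) (by simp) (by simp) (by simp) (by simp)

open Finset in
private lemma prod_pairs_aux' {M : Type*} [CommMonoid M] {ℓ : ℕ} (f : Fin ℓ → Fin ℓ → M) :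
    ∏ p ∈ Finset.univ.filter (fun p : Fin ℓ × Fin ℓ => p.1 < p.2), f p.1 p.2
      = ∏ j, ∏ i ∈ Finset.Iio j, f i j := by
  rw [Finset.prod_sigma']
  exact Finset.prod_nbij' (fun p => ⟨p.2, p.1⟩) (fun p => (p.2, p.1))
    (by simp [Finset.mem_Iio]) (by simp) (by simp) (by simp) (by simp)

open Finset in
private lemma prod_pairs_perm_aux {M : Type*} [CommMonoid M] {ℓ : ℕ} (σ : Equiv.Perm (Fin ℓ))
    (f : Fin ℓ → Fin ℓ → M) (hf : ∀ a b, f a b = f b a) :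
    ∏ p ∈ Finset.univ.filter (fun p : Fin ℓ × Fin ℓ => p.1 < p.2), f (σ p.1) (σ p.2)
      = ∏ p ∈ Finset.univ.filter (fun p : Fin ℓ × Fin ℓ => p.1 < p.2), f p.1 p.2 := by
  refine Finset.prod_nbij'
    (fun p => if σ p.1 < σ p.2 then (σ p.1, σ p.2) else (σ p.2, σ p.1))
    (fun p => if σ⁻¹ p.1 < σ⁻¹ p.2 then (σ⁻¹ p.1, σ⁻¹ p.2) else (σ⁻¹ p.2, σ⁻¹ p.1))
    ?_ ?_ ?_ ?_ ?_
  · intro p hp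
    simp only [Finset.mem_filter, Finset.mem_univ, true_and] at hp ⊢
    split_ifs with hc
    · exact hc
    · rcases lt_or_eq_of_le (not_lt.mp hc) with h' | h'
      · exact h'
      · exact absurd (σ.injective h') (ne_of_gt hp)
  · intro p hp
    simp only [Finset.mem_filter, Finset.mem_univ, true_and] at hp ⊢
    split_ifs with hc
    · exact hc
    · rcases lt_or_eq_of_le (not_lt.mp hc) with h' | h'
      · exact h'
      · exact absurd (σ⁻¹.injective h') (ne_of_gt hp)
  · intro p hp
    simp only [Finset.mem_filter, Finset.mem_univ, true_and] at hp
    by_cases hc : σ p.1 < σ p.2 <;>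
      simp only [hc, if_true, if_false, (show ∀ x, σ⁻¹ (σ x) = x from σ.symm_apply_apply)] <;>
      simp [hc, hp, not_lt.mpr (le_of_lt hp), lt_asymm hp]
  · intro p hp
    simp only [Finset.mem_filter, Finset.mem_univ, true_and] at hp
    by_cases hc : σ⁻¹ p.1 < σ⁻¹ p.2 <;>
      simp only [hc, if_true, if_false, (show ∀ x, σ (σ⁻¹ x) = x from σ.apply_symm_apply)] <;>
      simp [hc, hp, not_lt.mpr (le_of_lt hp), lt_asymm hp]
  · intro p hp
    by_cases hc : σ p.1 < σ p.2 <;> simp only [hc, if_true, if_false]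
    exact (hf _ _)

open Complex in
private lemma exp_two_sub_aux (u v : ℝ) :
    Complex.exp (2*(u:ℂ)*I) - Complex.exp (2*(v:ℂ)*I)
      = Complex.exp (((u:ℂ)+v)*I) * (((2 * Real.sin (u-v) : ℝ) : ℂ) * I) := by
  have h1 : (2*(u:ℂ)*I) = ((u:ℂ)+v)*I + ((u:ℂ)-v)*I := by ring
  have h2 : (2*(v:ℂ)*I) = ((u:ℂ)+v)*I + -(((u:ℂ)-v)*I) := by ring
  rw [h1, h2, Complex.exp_add, Complex.exp_add, ← mul_sub]
  congr 1
  have e1 : ((u:ℂ)-v)*I = ((u-v:ℝ):ℂ)*I := by push_cast; ring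
  have e2 : -(((u-v:ℝ):ℂ)*I) = ((-(u-v):ℝ):ℂ)*I := by push_cast; ring
  rw [e1, e2, Complex.exp_mul_I, Complex.exp_mul_I, ← Complex.ofReal_sin, ← Complex.ofReal_cos,
    ← Complex.ofReal_sin, ← Complex.ofReal_cos, Real.cos_neg, Real.sin_neg]
  push_cast; ring

open Complex in
private lemma abs_exp_two_sub_aux (u v : ℝ) (h1 : 0 < u - v) (h2 : u - v < Real.pi) :
    (‖Complex.exp (2*(u:ℂ)*I) - Complex.exp (2*(v:ℂ)*I)‖ : ℂ)
      = ((2 * Real.sin (u-v) : ℝ) : ℂ) := by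
  rw [exp_two_sub_aux]
  have hsin : 0 < Real.sin (u - v) := Real.sin_pos_of_pos_of_lt_pi h1 h2
  have : ‖Complex.exp (((u:ℂ)+v)*I)‖ = 1 := by
    rw [show ((u:ℂ)+v)*I = ((u+v:ℝ):ℂ)*I from by push_cast; ring, Complex.norm_exp_ofReal_mul_I]
  rw [norm_mul, this, one_mul, norm_mul, Complex.norm_I, mul_one, Complex.norm_real, Real.norm_eq_abs,
    abs_of_pos (by positivity)]

open Complex in
private lemma factor_eq_aux (u v : ℝ) (h1 : 0 < u - v) (h2 : u - v < Real.pi) :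
    Complex.exp (2*(u:ℂ)*I) - Complex.exp (2*(v:ℂ)*I)
      = Complex.I * (Complex.exp ((v:ℂ)*I) * Complex.exp ((u:ℂ)*I))
        * ((‖Complex.exp (2*(u:ℂ)*I) - Complex.exp (2*(v:ℂ)*I)‖ : ℝ) : ℂ) := by
  rw [abs_exp_two_sub_aux u v h1 h2, exp_two_sub_aux, ← Complex.exp_add,
    show (v:ℂ)*I + (u:ℂ)*I = ((u:ℂ)+v)*I from by ring]
  ring

private lemma factor_eq_aux2 (n a b : ℕ) (hnR : (0:ℝ) < n) (hab : a < b) (hbn : b < n) :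
    Complex.exp (2 * Real.pi * Complex.I * (b:ℂ) / n)
        - Complex.exp (2 * Real.pi * Complex.I * (a:ℂ) / n)
      = Complex.I * (Complex.exp (((Real.pi * a / n : ℝ):ℂ) * Complex.I)
          * Complex.exp (((Real.pi * b / n : ℝ):ℂ) * Complex.I))
        * ((‖Complex.exp (2 * Real.pi * Complex.I * (b:ℂ) / n)
            - Complex.exp (2 * Real.pi * Complex.I * (a:ℂ) / n)‖ : ℝ) : ℂ) := by
  set u : ℝ := Real.pi * b / n with hu
  set v : ℝ := Real.pi * a / n with hv
  have habR : (a:ℝ) < (b:ℝ) := by exact_mod_cast hab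
  have hbnR : (b:ℝ) < (n:ℝ) := by exact_mod_cast hbn
  have h1 : 0 < u - v := by
    have : v < u := by rw [hu, hv]; gcongr
    linarith
  have h2 : u - v < Real.pi := by
    rw [hu, hv, div_sub_div_same, ← mul_sub, mul_div_assoc]
    have hlt1 : ((b:ℝ) - a) / n < 1 := by
      rw [div_lt_one hnR]
      have : (0:ℝ) ≤ (a:ℝ) := Nat.cast_nonneg _
      linarith
    calc Real.pi * (((b:ℝ) - a) / n) < Real.pi * 1 :=
          mul_lt_mul_of_pos_left hlt1 Real.pi_pos
      _ = Real.pi := mul_one _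
  have e1 : 2 * Real.pi * Complex.I * (b:ℂ) / n = 2*((u:ℝ):ℂ)*Complex.I := by
    rw [hu]; push_cast; ring
  have e2 : 2 * Real.pi * Complex.I * (a:ℂ) / n = 2*((v:ℝ):ℂ)*Complex.I := by
    rw [hv]; push_cast; ring
  rw [e1, e2]
  exact factor_eq_aux u v h1 h2

/-- `z_k = e^{(2πi/n)((n-ℓ+1)/2 + k)}`, `k = 0,…,ℓ-1`: the `ℓ` roots of `(-1)^{n+ℓ+1}`
with least real part. -/
noncomputable def rootL (n ℓ : ℕ) (k : Fin ℓ) : ℂ :=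
  Complex.exp ((2 * Real.pi * Complex.I / n) * (((n : ℂ) - (ℓ : ℂ) + 1) / 2 + (k : ℂ)))

/-- Vandermonde evaluation at roots of unity:
`det(z_k^{h_j}) = sgn(σ_h) (-1)^{Σ h_j} i^{ℓ(ℓ-1)/2} ∏_{j<k} |e^{2πih_k/n} - e^{2πih_j/n}|`. -/
theorem vandermonde_roots_eval (n ℓ : ℕ) (hn : 2 ≤ n) (hℓ1 : 1 ≤ ℓ) (hℓn : ℓ ≤ n - 1)
    (h : Fin ℓ → ℕ) (hinj : Function.Injective h) (hlt : ∀ j, h j < n)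
    (σ : Equiv.Perm (Fin ℓ)) (hσ : StrictMono (fun j => h (σ j))) :
    Matrix.det (Matrix.of fun j k : Fin ℓ => rootL n ℓ k ^ (h j))
    = ((Equiv.Perm.sign σ : ℤ) : ℂ) * (-1 : ℂ) ^ (∑ j, h j)
      * Complex.I ^ (ℓ * (ℓ - 1) / 2)
      * ∏ p ∈ Finset.univ.filter (fun p : Fin ℓ × Fin ℓ => p.1 < p.2),
          ((‖Complex.exp (2 * Real.pi * Complex.I * (h p.2) / n)
            - Complex.exp (2 * Real.pi * Complex.I * (h p.1) / n)‖ : ℝ) : ℂ) := by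
  have hn0 : (n:ℂ) ≠ 0 := Nat.cast_ne_zero.mpr (by omega)
  have hnR : (0:ℝ) < n := by exact_mod_cast Nat.pos_of_ne_zero (by omega)
  set g : Fin ℓ → ℕ := fun j => h (σ j) with hg
  have hglt : ∀ j, g j < n := fun j => hlt _
  have hgmono : StrictMono g := hσ
  -- abbreviations
  set d : Fin ℓ → ℂ := fun j => Complex.exp (Real.pi * Complex.I * (((n:ℂ) - ℓ + 1) * (g j)) / n)
    with hd
  set x : Fin ℓ → ℂ := fun j => Complex.exp (2 * Real.pi * Complex.I * (g j) / n) with hx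
  set w : Fin ℓ → ℂ := fun m => Complex.exp (((Real.pi * (g m) / n : ℝ) : ℂ) * Complex.I) with hw
  set f : Fin ℓ → Fin ℓ → ℂ := fun a b =>
    ((‖Complex.exp (2 * Real.pi * Complex.I * (h b) / n)
      - Complex.exp (2 * Real.pi * Complex.I * (h a) / n)‖ : ℝ) : ℂ) with hf
  -- Step A: sort the rows
  have hA : Matrix.det (Matrix.of fun j k : Fin ℓ => rootL n ℓ k ^ (h j))
      = ((Equiv.Perm.sign σ : ℤ) : ℂ)
        * Matrix.det (Matrix.of fun j k : Fin ℓ => rootL n ℓ k ^ (g j)) := by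
    have e : (Matrix.of fun j k : Fin ℓ => rootL n ℓ k ^ (h j))
        = (Matrix.of fun j k : Fin ℓ => rootL n ℓ k ^ (g j)).submatrix (⇑(σ⁻¹)) id := by
      ext j k
      simp [hg]
    rw [e, Matrix.det_permute, Equiv.Perm.sign_inv]
  -- Step B: pull out row factors, Vandermonde
  have hentry : ∀ j k : Fin ℓ, rootL n ℓ k ^ (g j) = d j * x j ^ (k : ℕ) := by
    intro j k
    rw [rootL, hd, hx, ← Complex.exp_nat_mul, ← Complex.exp_nat_mul, ← Complex.exp_add]
    congr 1
    field_simp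
  have hB : Matrix.det (Matrix.of fun j k : Fin ℓ => rootL n ℓ k ^ (g j))
      = (∏ j, d j) * ∏ i, ∏ j ∈ Finset.Ioi i, (x j - x i) := by
    have e : (Matrix.of fun j k : Fin ℓ => rootL n ℓ k ^ (g j))
        = Matrix.of (fun j k : Fin ℓ => d j * (Matrix.vandermonde x) j k) := by
      ext j k
      simp [hentry, Matrix.vandermonde]
    rw [e, Matrix.det_mul_column, Matrix.det_vandermonde]
  -- Step C: per-factor identity
  have hfac : ∀ i j : Fin ℓ, i < j →
      x j - x i = Complex.I * (w i * w j) * f (σ i) (σ j) := by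
    intro i j hij
    have hgij : g i < g j := hgmono hij
    simp only [hx, hw, hf, hg]
    exact factor_eq_aux2 n (h (σ i)) (h (σ j)) hnR hgij (hlt _)
  -- Step D: split the Vandermonde product
  have hC : (∏ i, ∏ j ∈ Finset.Ioi i, (x j - x i))
      = (∏ i : Fin ℓ, ∏ _j ∈ Finset.Ioi i, Complex.I)
        * (∏ i, ∏ j ∈ Finset.Ioi i, (w i * w j))
        * (∏ i, ∏ j ∈ Finset.Ioi i, f (σ i) (σ j)) := by
    calc (∏ i, ∏ j ∈ Finset.Ioi i, (x j - x i))
        = ∏ i, ∏ j ∈ Finset.Ioi i, (Complex.I * (w i * w j) * f (σ i) (σ j)) := by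
          refine Finset.prod_congr rfl fun i _ => Finset.prod_congr rfl fun j hj => ?_
          exact hfac i j (Finset.mem_Ioi.mp hj)
      _ = _ := by simp [Finset.prod_mul_distrib]
  have hT1 : (∏ i : Fin ℓ, ∏ _j ∈ Finset.Ioi i, Complex.I)
      = Complex.I ^ (ℓ * (ℓ - 1) / 2) := by
    simp only [Finset.prod_const, Fin.card_Ioi]
    rw [Finset.prod_pow_eq_pow_sum]
    congr 1
    rw [Fin.sum_univ_eq_sum_range (fun i => ℓ - 1 - i),
      show (∑ i ∈ Finset.range ℓ, (ℓ - 1 - i)) = ∑ i ∈ Finset.range ℓ, i from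
        Finset.sum_range_reflect id ℓ,
      Finset.sum_range_id]
  have hswap : (∏ i, ∏ j ∈ Finset.Ioi i, w j) = ∏ m, w m ^ (m : ℕ) := by
    rw [← prod_pairs_aux (fun _ j => w j), prod_pairs_aux' (fun _ j => w j)]
    simp [Finset.prod_const, Fin.card_Iio]
  have hT2a : (∏ i, ∏ j ∈ Finset.Ioi i, (w i * w j)) = ∏ m, w m ^ (ℓ - 1) := by
    simp only [Finset.prod_mul_distrib]
    rw [hswap]
    simp only [Finset.prod_const, Fin.card_Ioi]
    rw [← Finset.prod_mul_distrib]
    refine Finset.prod_congr rfl fun m _ => ?_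
    rw [← pow_add]
    congr 1
    have := m.isLt
    omega
  have hper : ∀ m : Fin ℓ, d m * w m ^ (ℓ - 1) = (-1 : ℂ) ^ (g m) := by
    intro m
    simp only [hd, hw]
    rw [← Complex.exp_nat_mul, ← Complex.exp_add]
    have harg : Real.pi * Complex.I * (((n:ℂ) - ℓ + 1) * (g m)) / n
        + ((ℓ - 1 : ℕ) : ℂ) * (((Real.pi * (g m) / n : ℝ) : ℂ) * Complex.I)
        = ((g m : ℕ) : ℂ) * ((Real.pi : ℂ) * Complex.I) := by
      have hc : ((ℓ - 1 : ℕ) : ℂ) = (ℓ : ℂ) - 1 := by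
        rw [Nat.cast_sub hℓ1]; norm_num
      rw [hc]
      push_cast
      field_simp
      ring
    rw [harg, Complex.exp_nat_mul, Complex.exp_pi_mul_I]
  have hT2 : (∏ j, d j) * (∏ m, w m ^ (ℓ - 1)) = (-1 : ℂ) ^ (∑ j, h j) := by
    rw [← Finset.prod_mul_distrib, Finset.prod_congr rfl fun m _ => hper m,
      Finset.prod_pow_eq_pow_sum]
    congr 1
    simp only [hg]
    exact Equiv.sum_comp σ h
  have hsym : ∀ a b, f a b = f b a := by
    intro a b
    simp only [hf]
    congr 1
    exact norm_sub_rev _ _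
  have hT3 : (∏ i, ∏ j ∈ Finset.Ioi i, f (σ i) (σ j))
      = ∏ p ∈ Finset.univ.filter (fun p : Fin ℓ × Fin ℓ => p.1 < p.2), f p.1 p.2 := by
    rw [← prod_pairs_aux (fun i j => f (σ i) (σ j))]
    exact prod_pairs_perm_aux σ f hsym
  rw [hA, hB, hC, hT1, hT2a, hT3]
  have final : (∏ j, d j)
      * (Complex.I ^ (ℓ * (ℓ - 1) / 2) * (∏ m, w m ^ (ℓ - 1))
        * ∏ p ∈ Finset.univ.filter (fun p : Fin ℓ × Fin ℓ => p.1 < p.2), f p.1 p.2)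
      = (-1 : ℂ) ^ (∑ j, h j) * Complex.I ^ (ℓ * (ℓ - 1) / 2)
        * ∏ p ∈ Finset.univ.filter (fun p : Fin ℓ × Fin ℓ => p.1 < p.2), f p.1 p.2 := by
    calc (∏ j, d j)
        * (Complex.I ^ (ℓ * (ℓ - 1) / 2) * (∏ m, w m ^ (ℓ - 1))
          * ∏ p ∈ Finset.univ.filter (fun p : Fin ℓ × Fin ℓ => p.1 < p.2), f p.1 p.2)
        = ((∏ j, d j) * (∏ m, w m ^ (ℓ - 1)))
          * (Complex.I ^ (ℓ * (ℓ - 1) / 2)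
            * ∏ p ∈ Finset.univ.filter (fun p : Fin ℓ × Fin ℓ => p.1 < p.2), f p.1 p.2) := by
          ring
      _ = _ := by rw [hT2]; ring
  rw [final, hf]
  ring
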